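/- Let F : M_{m,n} → (−∞,+∞] be an orthogonally invariant matrix function with F = f ∘ σ for an absolutely symmetric function f : ℝⁿ → (−∞,+∞]. Then for every x ∈ ℝⁿ, dist(x, dom f) = dist(diag(x), dom F), where diag(x) is the m×n matrix with x on its diagonal and zeros elsewhere. -/

import Mathlib

open Filter Topology Matrix

noncomputable section

abbrev Mat (m n : ℕ) := Matrix (Fin m) (Fin n) ℝ

namespace Paper

/-- Frobenius (trace) inner product on real matrices. -/
def finner {m n : ℕ} (X Y : Mat m n) : ℝ := ∑ i, ∑ j, X i j * Y i j

/-- Frobenius norm. -/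
def fnorm {m n : ℕ} (X : Mat m n) : ℝ := Real.sqrt (finner X X)

/-- Euclidean inner product on `ℝⁿ`. -/
def vinner {n : ℕ} (x y : Fin n → ℝ) : ℝ := ∑ i, x i * y i

/-- Euclidean norm on `ℝⁿ`. -/
def vnorm {n : ℕ} (x : Fin n → ℝ) : ℝ := Real.sqrt (vinner x x)

/-- Eigenvalues of a real symmetric matrix, arranged in nonincreasing order. -/
def eigs {k : ℕ} (A : Matrix (Fin k) (Fin k) ℝ) (hA : A.IsHermitian) : Fin k → ℝ :=
  fun i => hA.eigenvalues (Tuple.sort (fun j => -(hA.eigenvalues j)) i)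

/-- Singular values of a real `m × n` matrix, arranged in nonincreasing order. -/
def svals {m n : ℕ} (X : Mat m n) : Fin n → ℝ :=
  fun i => Real.sqrt (eigs _ (show (Xᵀ * X).IsHermitian by
    simpa using Matrix.isHermitian_conjTranspose_mul_self X) i)

/-- The `m × n` matrix with `x` on the diagonal and zeros elsewhere. -/
def mdiag {m n : ℕ} (x : Fin n → ℝ) : Mat m n :=
  fun i j => if (i : ℕ) = (j : ℕ) then x j else 0

/-- The symmetric block matrix `B(X) = [[0, X], [Xᵀ, 0]]`, reindexed over `Fin (m+n)`. -/
def bmat {m n : ℕ} (X : Mat m n) : Matrix (Fin (m + n)) (Fin (m + n)) ℝ :=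
  Matrix.reindex finSumFinEquiv finSumFinEquiv (Matrix.fromBlocks 0 X Xᵀ 0)

lemma bmat_isHermitian {m n : ℕ} (X : Mat m n) : (bmat X).IsHermitian := by
  rw [Matrix.IsHermitian]
  ext i j
  simp only [bmat, Matrix.conjTranspose_apply, Matrix.reindex_apply, Matrix.submatrix_apply,
    star_trivial]
  rcases hi : finSumFinEquiv.symm i with a | a <;> rcases hj : finSumFinEquiv.symm j with b | b <;>
    simp [Matrix.fromBlocks, Matrix.transpose_apply]

/-- Eigenvalues of `B(X)` in nonincreasing order. -/
def beigs {m n : ℕ} (X : Mat m n) : Fin (m + n) → ℝ :=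
  eigs (bmat X) (bmat_isHermitian X)

/-- `Q` is a signed permutation matrix. -/
def IsSignedPerm {n : ℕ} (Q : Matrix (Fin n) (Fin n) ℝ) : Prop :=
  ∃ (e : Equiv.Perm (Fin n)) (s : Fin n → ℝ), (∀ i, s i = 1 ∨ s i = -1) ∧
    ∀ i j, Q i j = if j = e i then s i else 0

/-- A set of vectors invariant under all signed permutations. -/
def AbsSymSet {n : ℕ} (K : Set (Fin n → ℝ)) : Prop :=
  ∀ Q, IsSignedPerm Q → ∀ x ∈ K, Q.mulVec x ∈ K

/-- An extended-real-valued absolutely symmetric function. -/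
def AbsSymFun {n : ℕ} (f : (Fin n → ℝ) → EReal) : Prop :=
  ∀ Q, IsSignedPerm Q → ∀ x, f (Q.mulVec x) = f x

/-- Euclidean distance from a point to a set in `ℝⁿ`. -/
def vdist {n : ℕ} (x : Fin n → ℝ) (K : Set (Fin n → ℝ)) : ℝ :=
  sInf ((fun y => vnorm (x - y)) '' K)

/-- Frobenius distance from a matrix to a set of matrices. -/
def mdist {m n : ℕ} (X : Mat m n) (Γ : Set (Mat m n)) : ℝ :=
  sInf ((fun Y => fnorm (X - Y)) '' Γ)

section Variational

variable {E : Type*} [AddCommGroup E] [Module ℝ E] [TopologicalSpace E]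

/-- The subderivative `dg(x)(w) = liminf_{t↓0, w'→w} (g(x+tw') - g(x))/t`. -/
def subderiv (g : E → EReal) (x w : E) : EReal :=
  liminf (fun p : ℝ × E => ((p.1⁻¹ : ℝ) : EReal) * (g (x + p.1 • p.2) - g x))
    ((𝓝[>] (0 : ℝ)) ×ˢ 𝓝 w)

/-- The second-order difference quotient `Δ²_τ g(x | v)(w)`. -/
def secondQuot (ip : E → E → ℝ) (g : E → EReal) (x v : E) (τ : ℝ) (w : E) : EReal :=
  ((2 / τ ^ 2 : ℝ) : EReal) * (g (x + τ • w) - g x - ((τ * ip v w : ℝ) : EReal))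

/-- The second subderivative `d²g(x | v)(w)`. -/
def secondSubderiv (ip : E → E → ℝ) (g : E → EReal) (x v w : E) : EReal :=
  liminf (fun p : ℝ × E => secondQuot ip g x v p.1 p.2) ((𝓝[>] (0 : ℝ)) ×ˢ 𝓝 w)

/-- The parabolic difference quotient `Δ²_τ g(x)(w | z)`. -/
def parabQuot (g : E → EReal) (x w : E) (τ : ℝ) (z : E) : EReal :=
  ((2 / τ ^ 2 : ℝ) : EReal) *
    (g (x + τ • w + (τ ^ 2 / 2) • z) - g x - ((τ : ℝ) : EReal) * subderiv g x w)

/-- The parabolic subderivative `d²g(x)(w | z)`. -/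
def parabolicSubderiv (g : E → EReal) (x w z : E) : EReal :=
  liminf (fun p : ℝ × E => parabQuot g x w p.1 p.2) ((𝓝[>] (0 : ℝ)) ×ˢ 𝓝 z)

/-- Parabolic epi-differentiability of `g` at `x` for `w`. -/
def ParabEpiDiffAt (g : E → EReal) (x w : E) : Prop :=
  (∃ z, parabolicSubderiv g x w z < ⊤) ∧
  ∀ z : E, ∀ t : ℕ → ℝ, (∀ k, 0 < t k) → Tendsto t atTop (𝓝 0) →
    ∃ zk : ℕ → E, Tendsto zk atTop (𝓝 z) ∧
      Tendsto (fun k => parabQuot g x w (t k) (zk k)) atTop (𝓝 (parabolicSubderiv g x w z))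

/-- The (contingent) tangent cone to `C` at `x`. -/
def tangentConeOf (C : Set E) (x : E) : Set E :=
  {w | ∃ t : ℕ → ℝ, ∃ w' : ℕ → E, (∀ k, 0 < t k) ∧ Tendsto t atTop (𝓝 0) ∧
    Tendsto w' atTop (𝓝 w) ∧ ∀ k, x + t k • w' k ∈ C}

/-- The second-order tangent set to `C` at `x` for `w`. -/
def tangentCone2Of (C : Set E) (x w : E) : Set E :=
  {u | ∃ t : ℕ → ℝ, ∃ u' : ℕ → E, (∀ k, 0 < t k) ∧ Tendsto t atTop (𝓝 0) ∧
    Tendsto u' atTop (𝓝 u) ∧ ∀ k, x + t k • w + (t k ^ 2 / 2) • u' k ∈ C}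

/-- Parabolic derivability of the set `C` at `x` for `w`. -/
def ParabolicallyDerivable (C : Set E) (x w : E) : Prop :=
  (tangentCone2Of C x w).Nonempty ∧
  ∀ u ∈ tangentCone2Of C x w, ∃ ε > (0 : ℝ), ∃ ξ : ℝ → E,
    (∀ t ∈ Set.Icc (0 : ℝ) ε, ξ t ∈ C) ∧ ξ 0 = x ∧
    Tendsto (fun t : ℝ => t⁻¹ • (ξ t - x)) (𝓝[>] 0) (𝓝 w) ∧
    Tendsto (fun t : ℝ => (2 / t ^ 2) • (ξ t - x - t • w)) (𝓝[>] 0) (𝓝 u)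

/-- The convex subdifferential of `g` at `x` (w.r.t. the pairing `ip`). -/
def convSubdiff (ip : E → E → ℝ) (g : E → EReal) (x : E) : Set E :=
  {v | ∀ y, ((ip v (y - x) : ℝ) : EReal) + g x ≤ g y}

/-- Convexity for extended-real-valued functions. -/
def ConvexEReal (g : E → EReal) : Prop :=
  ∀ x y : E, ∀ t : ℝ, 0 ≤ t → t ≤ 1 →
    g (t • x + (1 - t) • y) ≤ ((t : ℝ) : EReal) * g x + ((1 - t : ℝ) : EReal) * g y

end Variational

/-- Local Lipschitz continuity of `f` relative to its domain (everywhere on the domain). -/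
def LocLipRelDom {n : ℕ} (f : (Fin n → ℝ) → EReal) : Prop :=
  ∀ x, f x ≠ ⊤ → ∃ l ≥ (0 : ℝ), ∃ U ∈ 𝓝 x, ∀ y ∈ U, ∀ z ∈ U, f y ≠ ⊤ → f z ≠ ⊤ →
    |(f y).toReal - (f z).toReal| ≤ l * vnorm (y - z)

/-- The columns of `U` with indices `r, r+1, …, k-1`. -/
def colsFrom {k : ℕ} (r : ℕ) (U : Matrix (Fin k) (Fin k) ℝ) :
    Matrix (Fin k) (Fin (k - r)) ℝ :=
  fun i j => U i ⟨r + (j : ℕ), by have := j.isLt; omega⟩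

/-- The first `r` columns of `U`. -/
def firstCols {k : ℕ} (r : ℕ) (h : r ≤ k) (U : Matrix (Fin k) (Fin k) ℝ) :
    Matrix (Fin k) (Fin r) ℝ :=
  fun i j => U i (Fin.castLE h j)

/-- The submatrix of `M` with rows `a ≤ · < b` and columns `c ≤ · < d`. -/
def subBlock {p q : ℕ} (M : Matrix (Fin p) (Fin q) ℝ) (a b c d : ℕ)
    (h1 : b ≤ p) (h2 : d ≤ q) : Matrix (Fin (b - a)) (Fin (d - c)) ℝ :=
  fun i j => M ⟨a + (i : ℕ), by have := i.isLt; omega⟩ ⟨c + (j : ℕ), by have := j.isLt; omega⟩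

/-- Nuclear norm: the sum of all singular values. -/
def nucNorm {m n : ℕ} (A : Mat m n) : ℝ := ∑ j, svals A j

/-- `Ψₙ(X) = σ_{r+1}(X) + ⋯ + σ_n(X)`, the sum of the `n - r` smallest singular values. -/
def psiN {m n : ℕ} (r : ℕ) (X : Mat m n) : ℝ :=
  ∑ s : Fin n, if r ≤ (s : ℕ) then svals X s else 0

/-- The regular (Fréchet) subdifferential of a real-valued function on matrices. -/
def regSubdiff {m n : ℕ} (g : Mat m n → ℝ) (X : Mat m n) : Set (Mat m n) :=
  {V | ∀ ε > (0 : ℝ), ∀ᶠ Y in 𝓝 X, g X + finner V (Y - X) - ε * fnorm (Y - X) ≤ g Y}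

/-- Two square matrices admit a simultaneous ordered spectral decomposition. -/
def SimSpec {k : ℕ} (A B : Matrix (Fin k) (Fin k) ℝ) : Prop :=
  ∃ (W : Matrix (Fin k) (Fin k) ℝ) (a b : Fin k → ℝ), Wᵀ * W = 1 ∧
    Antitone a ∧ Antitone b ∧
    A = W * Matrix.diagonal a * Wᵀ ∧ B = W * Matrix.diagonal b * Wᵀ

/-- Two rectangular matrices admit a simultaneous ordered singular value decomposition. -/
def SimSVD {p q : ℕ} (A B : Matrix (Fin p) (Fin q) ℝ) : Prop :=
  ∃ (U : Matrix (Fin p) (Fin p) ℝ) (V : Matrix (Fin q) (Fin q) ℝ)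
    (a b : Fin q → ℝ), Uᵀ * U = 1 ∧ Vᵀ * V = 1 ∧
    Antitone a ∧ Antitone b ∧ (∀ j, 0 ≤ a j) ∧ (∀ j, 0 ≤ b j) ∧
    A = U * (mdiag a : Mat p q) * Vᵀ ∧ B = U * (mdiag b : Mat p q) * Vᵀ

namespace SP

open Polynomial

/-! ### Sorting machinery -/

def sortD {k : ℕ} (d : Fin k → ℝ) : Fin k → ℝ :=
  fun i => d (Tuple.sort (fun j => -(d j)) i)

lemma sortD_antitone {k : ℕ} (d : Fin k → ℝ) : Antitone (sortD d) := by
  have h := Tuple.monotone_sort (fun j => -(d j))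
  intro i j hij
  have := h hij
  simp only [Function.comp_apply] at this
  unfold sortD
  linarith

lemma multiset_map_perm {k : ℕ} (f : Fin k → ℝ) (σ : Equiv.Perm (Fin k)) :
    Multiset.map (f ∘ σ) Finset.univ.val = Multiset.map f Finset.univ.val := by
  rw [← Multiset.map_map]
  congr 1
  have := congrArg Finset.val (Finset.map_univ_equiv σ)
  rw [Finset.map_val] at this
  simpa using this

lemma multiset_sortD {k : ℕ} (f : Fin k → ℝ) :
    Multiset.map (sortD f) Finset.univ.val = Multiset.map f Finset.univ.val := by
  have : sortD f = f ∘ (Tuple.sort (fun j => -(f j))) := rfl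
  rw [this, multiset_map_perm]

lemma sortD_eq_of_multiset_eq {k : ℕ} {f g : Fin k → ℝ}
    (h : Multiset.map f Finset.univ.val = Multiset.map g Finset.univ.val) :
    sortD f = sortD g := by
  have hf : Multiset.map (sortD f) Finset.univ.val = Multiset.map (sortD g) Finset.univ.val := by
    rw [multiset_sortD, multiset_sortD, h]
  have huniv : (Finset.univ.val : Multiset (Fin k)) = ↑(List.finRange k) := rfl
  rw [huniv] at hf
  rw [Multiset.map_coe, Multiset.map_coe, Multiset.coe_eq_coe] at hf
  have hof : ∀ (u : Fin k → ℝ), (List.finRange k).map u = List.ofFn u := fun u =>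
    (List.ofFn_eq_map).symm
  rw [hof, hof] at hf
  have hs1 : (List.ofFn (sortD f)).Pairwise (· ≥ ·) := by
    rw [List.pairwise_ofFn]
    intro i j hij
    exact sortD_antitone f hij.le
  have hs2 : (List.ofFn (sortD g)).Pairwise (· ≥ ·) := by
    rw [List.pairwise_ofFn]
    intro i j hij
    exact sortD_antitone g hij.le
  exact List.ofFn_injective (List.Perm.eq_of_pairwise (fun a b _ _ h1 h2 => le_antisymm h2 h1) hs1 hs2 hf)

/-! ### Characteristic polynomial and eigenvalue multisets -/

lemma charmatrix_diagonal' {k : ℕ} (d : Fin k → ℝ) :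
    charmatrix (Matrix.diagonal d) = Matrix.diagonal (fun i => (X : ℝ[X]) - C (d i)) := by
  ext i j
  by_cases h : i = j
  · subst h; simp [charmatrix_apply_eq]
  · rw [charmatrix_apply_ne _ _ _ h, Matrix.diagonal_apply_ne _ h, Matrix.diagonal_apply_ne _ h]
    simp

lemma charpoly_diagonal' {k : ℕ} (d : Fin k → ℝ) :
    (Matrix.diagonal d).charpoly = ∏ i, (X - C (d i)) := by
  rw [Matrix.charpoly, charmatrix_diagonal', Matrix.det_diagonal]

lemma charpoly_conj_diag {k : ℕ} (V : Matrix (Fin k) (Fin k) ℝ) (d : Fin k → ℝ)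
    (hV : Vᵀ * V = 1) :
    (V * Matrix.diagonal d * Vᵀ).charpoly = ∏ i, (X - C (d i)) := by
  have hV2 : V * Vᵀ = 1 := mul_eq_one_comm.mp hV
  have hmap2 : (V * Vᵀ).map (C : ℝ →+* ℝ[X]) = (1 : Matrix (Fin k) (Fin k) ℝ[X]) := by
    rw [hV2]; ext i j; by_cases h : i = j <;> simp [h, Matrix.one_apply]
  have key : charmatrix (V * Matrix.diagonal d * Vᵀ) =
      (V.map C) * charmatrix (Matrix.diagonal d) * (Vᵀ.map C) := by
    unfold charmatrix
    rw [Matrix.mul_sub, Matrix.sub_mul]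
    congr 1
    · have hs : (Matrix.scalar (Fin k)) (X : ℝ[X]) = (X : ℝ[X]) • (1 : Matrix (Fin k) (Fin k) ℝ[X]) := by
        ext i j; by_cases h : i = j <;> simp [h, Matrix.scalar_apply, Matrix.one_apply]
      rw [hs, Matrix.mul_smul, Matrix.mul_one, Matrix.smul_mul]
      rw [show (V.map (C : ℝ →+* ℝ[X])) * (Vᵀ.map C) = (V * Vᵀ).map C from (Matrix.map_mul ..).symm,
        hmap2]
    · simp only [RingHom.mapMatrix_apply]
      rw [← Matrix.map_mul, ← Matrix.map_mul]
  rw [Matrix.charpoly, key, Matrix.det_mul, Matrix.det_mul]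
  rw [mul_comm ((V.map (C : ℝ →+* ℝ[X])).det), mul_assoc, ← Matrix.det_mul, ← Matrix.map_mul, hmap2]
  rw [Matrix.det_one, mul_one, ← Matrix.charpoly, charpoly_diagonal']

lemma conjTranspose_eq_transpose_real {k l : ℕ} (M : Matrix (Fin k) (Fin l) ℝ) :
    Mᴴ = Mᵀ := by ext i j; simp [Matrix.conjTranspose_apply]

/-- real spectral theorem with transposes -/
lemma spectral_real {k : ℕ} {A : Matrix (Fin k) (Fin k) ℝ} (hA : A.IsHermitian) :
    (hA.eigenvectorUnitary : Matrix (Fin k) (Fin k) ℝ)ᵀ *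
      (hA.eigenvectorUnitary : Matrix (Fin k) (Fin k) ℝ) = 1 ∧
    A = (hA.eigenvectorUnitary : Matrix (Fin k) (Fin k) ℝ) *
      Matrix.diagonal (hA.eigenvalues) * (hA.eigenvectorUnitary : Matrix (Fin k) (Fin k) ℝ)ᵀ := by
  constructor
  · rw [← conjTranspose_eq_transpose_real, ← Matrix.star_eq_conjTranspose]
    exact (Unitary.mem_iff.mp (hA.eigenvectorUnitary).2).1
  · have h := hA.spectral_theorem
    rw [← conjTranspose_eq_transpose_real]
    convert h using 2
    all_goals (ext i; simp [Matrix.star_eq_conjTranspose, conjTranspose_eq_transpose_real])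

lemma eigen_multiset {k : ℕ} {A : Matrix (Fin k) (Fin k) ℝ} (hA : A.IsHermitian)
    {V : Matrix (Fin k) (Fin k) ℝ} {d : Fin k → ℝ} (hV : Vᵀ * V = 1)
    (hdecomp : A = V * Matrix.diagonal d * Vᵀ) :
    Multiset.map hA.eigenvalues Finset.univ.val = Multiset.map d Finset.univ.val := by
  obtain ⟨hUorth, hU⟩ := spectral_real hA
  have h1 : A.charpoly = ∏ i, (X - C (hA.eigenvalues i)) := by
    conv_lhs => rw [hU]
    exact charpoly_conj_diag _ _ hUorth
  have h2 : A.charpoly = ∏ i, (X - C (d i)) := by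
    conv_lhs => rw [hdecomp]
    exact charpoly_conj_diag _ _ hV
  have h3 : (Multiset.map (fun a => X - C a)
        (Multiset.map hA.eigenvalues Finset.univ.val)).prod =
      (Multiset.map (fun a => X - C a)
        (Multiset.map d Finset.univ.val)).prod := by
    rw [Multiset.map_map, Multiset.map_map]
    rw [show (Multiset.map ((fun a => X - C a) ∘ hA.eigenvalues) Finset.univ.val).prod = ∏ i, (X - C (hA.eigenvalues i)) from rfl]
    rw [show (Multiset.map ((fun a => X - C a) ∘ d) Finset.univ.val).prod = ∏ i, (X - C (d i)) from rfl]
    rw [← h1, ← h2]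
  have := congrArg Polynomial.roots h3
  rwa [Polynomial.roots_multiset_prod_X_sub_C, Polynomial.roots_multiset_prod_X_sub_C] at this

lemma eigs_eq_sortD {k : ℕ} (A : Matrix (Fin k) (Fin k) ℝ) (hA : A.IsHermitian) :
    eigs A hA = sortD hA.eigenvalues := rfl

lemma eigs_of_decomp {k : ℕ} {A : Matrix (Fin k) (Fin k) ℝ} (hA : A.IsHermitian)
    {V : Matrix (Fin k) (Fin k) ℝ} {d : Fin k → ℝ} (hV : Vᵀ * V = 1)
    (hdecomp : A = V * Matrix.diagonal d * Vᵀ) :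
    eigs A hA = sortD d := by
  rw [eigs_eq_sortD]
  exact sortD_eq_of_multiset_eq (eigen_multiset hA hV hdecomp)

/-! ### Singular value basics -/

lemma gram_herm {m n : ℕ} (X : Mat m n) : (Xᵀ * X).IsHermitian := by
  simpa using Matrix.isHermitian_conjTranspose_mul_self X

lemma eigs_gram_nonneg {m n : ℕ} (X : Mat m n) (j : Fin n) :
    0 ≤ eigs _ (gram_herm X) j := by
  exact (Matrix.posSemidef_conjTranspose_mul_self X).eigenvalues_nonneg _

lemma sq_svals {m n : ℕ} (X : Mat m n) (j : Fin n) :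
    svals X j ^ 2 = eigs _ (gram_herm X) j := by
  unfold svals
  rw [Real.sq_sqrt (eigs_gram_nonneg X j)]

lemma svals_nonneg {m n : ℕ} (X : Mat m n) (j : Fin n) : 0 ≤ svals X j :=
  Real.sqrt_nonneg _

lemma svals_antitone {m n : ℕ} (X : Mat m n) : Antitone (svals X) := by
  intro i j hij
  exact Real.sqrt_le_sqrt (sortD_antitone _ hij)

lemma sum_sortD {k : ℕ} (d : Fin k → ℝ) : ∑ i, sortD d i = ∑ i, d i :=
  Equiv.sum_comp (Tuple.sort (fun j => -(d j))) d

lemma sum_eigenvalues_eq_trace {k : ℕ} {A : Matrix (Fin k) (Fin k) ℝ} (hA : A.IsHermitian) :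
    ∑ i, hA.eigenvalues i = A.trace := by
  obtain ⟨hU1, hU2⟩ := spectral_real hA
  conv_rhs => rw [hU2]
  rw [Matrix.trace_mul_cycle, hU1, Matrix.one_mul, Matrix.trace_diagonal]

lemma sum_sq_svals {m n : ℕ} (X : Mat m n) : ∑ j, svals X j ^ 2 = finner X X := by
  have h1 : ∑ j, svals X j ^ 2 = ∑ j, eigs _ (gram_herm X) j := by
    simp_rw [sq_svals]
  rw [h1, eigs_eq_sortD, sum_sortD, sum_eigenvalues_eq_trace]
  rw [Matrix.trace]
  unfold finner
  rw [show ∀ (g : Fin m → Fin n → ℝ), ∑ i, ∑ j, g i j = ∑ j, ∑ i, g i j from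
    fun g => Finset.sum_comm]
  apply Finset.sum_congr rfl
  intro j _
  rw [Matrix.diag_apply, Matrix.mul_apply]
  apply Finset.sum_congr rfl
  intro a _
  change X a j * X a j = X a j * X a j
  simp

lemma conj_diag_apply {a b : ℕ} (M : Matrix (Fin a) (Fin b) ℝ) (d : Fin b → ℝ) (i j : Fin a) :
    (M * Matrix.diagonal d * Mᵀ) i j = ∑ c, M i c * d c * M j c := by
  rw [Matrix.mul_apply]
  congr 1
  ext c
  rw [Matrix.mul_diagonal, Matrix.transpose_apply]

/-- Existence of an SVD-type decomposition (with possibly defective `U`). -/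
lemma svd_exists {m n : ℕ} (X : Mat m n) :
    ∃ (U : Mat m n) (V : Matrix (Fin n) (Fin n) ℝ) (e : Fin n → ℝ),
      Uᵀ * U = Matrix.diagonal e ∧ (∀ j, 0 ≤ e j) ∧ (∀ j, e j ≤ 1) ∧
      Vᵀ * V = 1 ∧ X = U * Matrix.diagonal (svals X) * Vᵀ := by
  set G := Xᴴ * X with hGdef
  have hGdef2 : G = Xᵀ * X := by rw [hGdef, conjTranspose_eq_transpose_real]
  have hG : G.IsHermitian := gram_herm X
  obtain ⟨hU1, hU2⟩ := spectral_real hG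
  set U0 : Matrix (Fin n) (Fin n) ℝ := (hG.eigenvectorUnitary : Matrix (Fin n) (Fin n) ℝ) with hU0
  set p := Tuple.sort (fun j => -(hG.eigenvalues j)) with hp
  set V : Matrix (Fin n) (Fin n) ℝ := fun i j => U0 i (p j) with hV
  set μ : Fin n → ℝ := eigs G hG with hμ
  have hμdef : ∀ j, μ j = hG.eigenvalues (p j) := fun j => rfl
  have hVo : Vᵀ * V = 1 := by
    ext a b
    rw [Matrix.mul_apply]
    have h := congrFun (congrFun hU1 (p a)) (p b)
    rw [Matrix.mul_apply] at h
    simp only [Matrix.transpose_apply] at h ⊢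
    rw [hV]
    simp only
    rw [h, Matrix.one_apply, Matrix.one_apply]
    by_cases hab : a = b
    · simp [hab]
    · have : p a ≠ p b := fun hc => hab (p.injective hc)
      simp [hab, this]
  have hGV : G = V * Matrix.diagonal μ * Vᵀ := by
    ext i j
    rw [conj_diag_apply]
    conv_lhs => rw [hU2]
    rw [conj_diag_apply]
    exact (Equiv.sum_comp p (fun t => U0 i t * hG.eigenvalues t * U0 j t)).symm
  have hVV2 : V * Vᵀ = 1 := mul_eq_one_comm.mp hVo
  set W : Mat m n := X * V with hW
  have hWW : Wᵀ * W = Matrix.diagonal μ := by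
    have h1 : Wᵀ * W = Vᵀ * (G * V) := by
      rw [hW, Matrix.transpose_mul, hGdef2, Matrix.mul_assoc, Matrix.mul_assoc]
    rw [h1, hGV]
    calc Vᵀ * (V * Matrix.diagonal μ * Vᵀ * V) = (Vᵀ * V) * (Matrix.diagonal μ * (Vᵀ * V)) := by
          simp only [mul_assoc]
    _ = Matrix.diagonal μ := by rw [hVo, Matrix.one_mul, Matrix.mul_one]
  set σ : Fin n → ℝ := svals X with hσ
  have hσμ : ∀ j, σ j ^ 2 = μ j := fun j => sq_svals X j
  have hσ0 : ∀ j, 0 ≤ σ j := svals_nonneg X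
  have hcolzero : ∀ j, σ j = 0 → ∀ a, W a j = 0 := by
    intro j hj a
    have hsum : ∑ b, W b j * W b j = 0 := by
      have h := congrFun (congrFun hWW j) j
      rw [Matrix.mul_apply] at h
      simp only [Matrix.transpose_apply] at h
      rw [h, Matrix.diagonal_apply_eq, ← hσμ, hj]
      ring
    have := (Finset.sum_eq_zero_iff_of_nonneg (fun b _ => mul_self_nonneg (W b j))).mp hsum a (Finset.mem_univ a)
    nlinarith [this]
  have hWWij : ∀ i j, ∑ a, W a i * W a j = if i = j then μ i else 0 := by
    intro i j
    have h := congrFun (congrFun hWW i) j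
    rw [Matrix.mul_apply] at h
    simp only [Matrix.transpose_apply] at h
    rw [h, Matrix.diagonal_apply]
  set Umat : Mat m n := (fun a j => if σ j = 0 then 0 else W a j / σ j) with hUmat
  refine ⟨Umat, V, (fun j => if σ j = 0 then 0 else 1), ?_, ?_, ?_, hVo, ?_⟩
  · ext i j
    rw [Matrix.mul_apply]
    simp only [hUmat]
    change ∑ a, (if σ i = 0 then 0 else W a i / σ i) * (if σ j = 0 then 0 else W a j / σ j) = _
    rw [Matrix.diagonal_apply]
    by_cases hi : σ i = 0
    · rw [Finset.sum_eq_zero (fun a _ => by simp [hi])]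
      by_cases hij : i = j
      · subst hij; simp [hi]
      · simp [hij]
    · by_cases hj : σ j = 0
      · rw [Finset.sum_eq_zero (fun a _ => by simp [hj])]
        by_cases hij : i = j
        · exact absurd (hij ▸ hj) hi
        · simp [hij]
      · simp only [if_neg hi, if_neg hj]
        have hterm : ∀ a, W a i / σ i * (W a j / σ j) = (W a i * W a j) * (1 / (σ i * σ j)) := by
          intro a; field_simp
        rw [Finset.sum_congr rfl (fun a _ => hterm a), ← Finset.sum_mul, hWWij]
        by_cases hij : i = j
        · subst hij
          rw [if_pos rfl, if_pos rfl, ← hσμ]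
          field_simp
        · rw [if_neg hij, if_neg hij, zero_mul]
  · intro j; by_cases h : σ j = 0 <;> simp [h]
  · intro j; by_cases h : σ j = 0 <;> simp [h]
  · have hUD : Umat * Matrix.diagonal σ = W := by
      ext a j
      rw [Matrix.mul_diagonal]
      simp only [hUmat]
      by_cases hj : σ j = 0
      · simp [hj, hcolzero j hj a]
      · simp only [hj, if_false]
        field_simp
    rw [hUD, hW, Matrix.mul_assoc, hVV2, Matrix.mul_one]

/-! ### Bessel-type inequality -/

lemma bessel {m n : ℕ} (U : Mat m n) (e : Fin n → ℝ) (hU : Uᵀ * U = Matrix.diagonal e)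
    (he : ∀ j, e j ≤ 1) (z : Fin m → ℝ) :
    ∑ j, (∑ a, U a j * z a) ^ 2 ≤ ∑ a, z a ^ 2 := by
  have hUU : ∀ i j, ∑ a, U a i * U a j = if i = j then e i else 0 := by
    intro i j
    have h := congrFun (congrFun hU i) j
    rw [Matrix.mul_apply] at h
    simp only [Matrix.transpose_apply] at h
    rw [h, Matrix.diagonal_apply]
  set y : Fin n → ℝ := fun j => ∑ a, U a j * z a with hy
  set w : Fin m → ℝ := fun a => ∑ j, U a j * y j with hw
  have h1 : ∑ j, y j ^ 2 = ∑ a, z a * w a := by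
    calc ∑ j, y j ^ 2 = ∑ j, ∑ a, U a j * z a * y j := by
          apply Finset.sum_congr rfl; intro j _
          rw [sq, ← Finset.sum_mul]
    _ = ∑ a, ∑ j, U a j * z a * y j := Finset.sum_comm
    _ = ∑ a, z a * w a := by
          apply Finset.sum_congr rfl; intro a _
          rw [hw]
          simp only
          rw [Finset.mul_sum]
          apply Finset.sum_congr rfl; intro j _
          ring
  have h2 : ∑ a, w a ^ 2 = ∑ j, e j * y j ^ 2 := by
    calc ∑ a, w a ^ 2 = ∑ a, ∑ j, ∑ k, (U a j * y j) * (U a k * y k) := by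
          apply Finset.sum_congr rfl; intro a _
          rw [sq, Finset.sum_mul_sum]
    _ = ∑ j, ∑ a, ∑ k, (U a j * y j) * (U a k * y k) := Finset.sum_comm
    _ = ∑ j, ∑ k, ∑ a, (U a j * y j) * (U a k * y k) := by
          apply Finset.sum_congr rfl; intro j _
          exact Finset.sum_comm
    _ = ∑ j, ∑ k, (y j * y k) * ∑ a, U a j * U a k := by
          apply Finset.sum_congr rfl; intro j _
          apply Finset.sum_congr rfl; intro k _
          rw [Finset.mul_sum]
          apply Finset.sum_congr rfl; intro a _
          ring
    _ = ∑ j, e j * y j ^ 2 := by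
          apply Finset.sum_congr rfl; intro j _
          rw [Finset.sum_eq_single j]
          · rw [hUU, if_pos rfl]; ring
          · intro k _ hk
            rw [hUU, if_neg (fun h => hk h.symm), mul_zero]
          · intro h; exact absurd (Finset.mem_univ j) h
  have h3 : ∑ j, e j * y j ^ 2 ≤ ∑ j, y j ^ 2 := by
    apply Finset.sum_le_sum
    intro j _
    have := sq_nonneg (y j)
    nlinarith [he j]
  have hS0 : 0 ≤ ∑ j, y j ^ 2 := Finset.sum_nonneg (fun j _ => sq_nonneg _)
  have hT0 : 0 ≤ ∑ a, z a ^ 2 := Finset.sum_nonneg (fun a _ => sq_nonneg _)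
  have hcs := Finset.sum_mul_sq_le_sq_mul_sq Finset.univ z w
  nlinarith [hcs, h1, h2, h3, hS0, hT0]

/-! ### Abel summation / doubly substochastic inequality -/

lemma filter_le_range (n i : ℕ) :
    (Finset.range n).filter (fun s => i ≤ s) = Finset.Ico i n := by
  ext s
  simp only [Finset.mem_filter, Finset.mem_range, Finset.mem_Ico]
  omega

lemma sum_swap3 {n : ℕ} (F : Fin n → ℕ → ℕ → ℝ) :
    (∑ i : Fin n, ∑ s ∈ Finset.range n, ∑ t ∈ Finset.range n, F i s t)
    = ∑ s ∈ Finset.range n, ∑ t ∈ Finset.range n, ∑ i : Fin n, F i s t := by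
  calc (∑ i : Fin n, ∑ s ∈ Finset.range n, ∑ t ∈ Finset.range n, F i s t)
      = ∑ s ∈ Finset.range n, ∑ i : Fin n, ∑ t ∈ Finset.range n, F i s t := Finset.sum_comm
    _ = ∑ s ∈ Finset.range n, ∑ t ∈ Finset.range n, ∑ i : Fin n, F i s t := by
        apply Finset.sum_congr rfl; intro s _; exact Finset.sum_comm

lemma sum_swap4 {n : ℕ} (F : Fin n → Fin n → ℕ → ℕ → ℝ) :
    (∑ i : Fin n, ∑ j : Fin n, ∑ s ∈ Finset.range n, ∑ t ∈ Finset.range n, F i j s t)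
    = ∑ s ∈ Finset.range n, ∑ t ∈ Finset.range n, ∑ i : Fin n, ∑ j : Fin n, F i j s t := by
  calc (∑ i : Fin n, ∑ j : Fin n, ∑ s ∈ Finset.range n, ∑ t ∈ Finset.range n, F i j s t)
      = ∑ i : Fin n, ∑ s ∈ Finset.range n, ∑ t ∈ Finset.range n, ∑ j : Fin n, F i j s t := by
        apply Finset.sum_congr rfl; intro i _
        calc (∑ j : Fin n, ∑ s ∈ Finset.range n, ∑ t ∈ Finset.range n, F i j s t)
            = ∑ s ∈ Finset.range n, ∑ j : Fin n, ∑ t ∈ Finset.range n, F i j s t :=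
              Finset.sum_comm
          _ = ∑ s ∈ Finset.range n, ∑ t ∈ Finset.range n, ∑ j : Fin n, F i j s t := by
              apply Finset.sum_congr rfl; intro s _; exact Finset.sum_comm
    _ = ∑ s ∈ Finset.range n, ∑ i : Fin n, ∑ t ∈ Finset.range n, ∑ j : Fin n, F i j s t :=
        Finset.sum_comm
    _ = ∑ s ∈ Finset.range n, ∑ t ∈ Finset.range n, ∑ i : Fin n, ∑ j : Fin n, F i j s t := by
        apply Finset.sum_congr rfl; intro s _; exact Finset.sum_comm

lemma abel_ineq {n : ℕ} (σ τ : Fin n → ℝ) (S : Fin n → Fin n → ℝ)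
    (hσa : Antitone σ) (hτa : Antitone τ) (hσ0 : ∀ i, 0 ≤ σ i) (hτ0 : ∀ i, 0 ≤ τ i)
    (hS0 : ∀ i j, 0 ≤ S i j) (hrow : ∀ i, ∑ j, S i j ≤ 1) (hcol : ∀ j, ∑ i, S i j ≤ 1) :
    ∑ i, ∑ j, σ i * τ j * S i j ≤ ∑ i, σ i * τ i := by
  classical
  -- extensions to ℕ
  set σ' : ℕ → ℝ := fun s => if h : s < n then σ ⟨s, h⟩ else 0 with hσ'
  set τ' : ℕ → ℝ := fun s => if h : s < n then τ ⟨s, h⟩ else 0 with hτ'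
  set dσ : ℕ → ℝ := fun s => σ' s - σ' (s + 1) with hdσ
  set dτ : ℕ → ℝ := fun s => τ' s - τ' (s + 1) with hdτ
  have hσ'anti : ∀ s t : ℕ, s ≤ t → σ' t ≤ σ' s := by
    intro s t hst
    by_cases ht : t < n
    · have hs : s < n := lt_of_le_of_lt hst ht
      simp only [hσ', dif_pos ht, dif_pos hs]
      exact hσa hst
    · by_cases hs : s < n
      · simp only [hσ', dif_neg ht, dif_pos hs]; exact hσ0 _
      · simp only [hσ', dif_neg ht, dif_neg hs]; exact le_refl _
  have hτ'anti : ∀ s t : ℕ, s ≤ t → τ' t ≤ τ' s := by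
    intro s t hst
    by_cases ht : t < n
    · have hs : s < n := lt_of_le_of_lt hst ht
      simp only [hτ', dif_pos ht, dif_pos hs]
      exact hτa hst
    · by_cases hs : s < n
      · simp only [hτ', dif_neg ht, dif_pos hs]; exact hτ0 _
      · simp only [hτ', dif_neg ht, dif_neg hs]; exact le_refl _
  have hdσ0 : ∀ s, 0 ≤ dσ s := fun s => sub_nonneg.mpr (hσ'anti s (s+1) (Nat.le_succ s))
  have hdτ0 : ∀ s, 0 ≤ dτ s := fun s => sub_nonneg.mpr (hτ'anti s (s+1) (Nat.le_succ s))
  -- telescoping representation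
  have htel : ∀ (g : ℕ → ℝ) (hgn : g n = 0) (i : Fin n),
      g (i : ℕ) = ∑ s ∈ Finset.range n, if (i : ℕ) ≤ s then (g s - g (s+1)) else 0 := by
    intro g hgn i
    rw [← Finset.sum_filter, filter_le_range]
    rw [Finset.sum_Ico_eq_sub _ (le_of_lt i.isLt)]
    rw [Finset.sum_range_sub' g, Finset.sum_range_sub' g, hgn]
    ring
  have hσrep : ∀ i : Fin n, σ i = ∑ s ∈ Finset.range n, if (i : ℕ) ≤ s then dσ s else 0 := by
    intro i
    have h := htel σ' (by simp [hσ']) i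
    rw [show σ' (i : ℕ) = σ i from by simp [hσ', i.isLt]] at h
    exact h
  have hτrep : ∀ i : Fin n, τ i = ∑ s ∈ Finset.range n, if (i : ℕ) ≤ s then dτ s else 0 := by
    intro i
    have h := htel τ' (by simp [hτ']) i
    rw [show τ' (i : ℕ) = τ i from by simp [hτ', i.isLt]] at h
    exact h
  -- the partial-sum quantities
  set M : ℕ → ℕ → ℝ := fun s t => ∑ i : Fin n, ∑ j : Fin n, if (i : ℕ) ≤ s ∧ (j : ℕ) ≤ t then S i j else 0 with hM
  set N : ℕ → ℕ → ℝ := fun s t => ∑ i : Fin n, if (i : ℕ) ≤ s ∧ (i : ℕ) ≤ t then (1:ℝ) else 0 with hN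
  -- expansion of LHS
  have hLHS : ∑ i, ∑ j, σ i * τ j * S i j
      = ∑ s ∈ Finset.range n, ∑ t ∈ Finset.range n, dσ s * dτ t * M s t := by
    have step1 : ∑ i, ∑ j, σ i * τ j * S i j
        = ∑ i : Fin n, ∑ j : Fin n, ∑ s ∈ Finset.range n, ∑ t ∈ Finset.range n,
            (if (i : ℕ) ≤ s then dσ s else 0) * (if (j : ℕ) ≤ t then dτ t else 0) * S i j := by
      apply Finset.sum_congr rfl; intro i _
      apply Finset.sum_congr rfl; intro j _
      rw [hσrep i, hτrep j, Finset.sum_mul_sum, Finset.sum_mul]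
      apply Finset.sum_congr rfl; intro s _
      rw [Finset.sum_mul]
    rw [step1, sum_swap4]
    apply Finset.sum_congr rfl; intro s _
    apply Finset.sum_congr rfl; intro t _
    rw [hM]
    simp only
    rw [Finset.mul_sum]
    apply Finset.sum_congr rfl; intro i _
    rw [Finset.mul_sum]
    apply Finset.sum_congr rfl; intro j _
    by_cases h1 : (i : ℕ) ≤ s <;> by_cases h2 : (j : ℕ) ≤ t <;>
      simp [h1, h2] <;> ring
  -- expansion of RHS
  have hRHS : ∑ i, σ i * τ i
      = ∑ s ∈ Finset.range n, ∑ t ∈ Finset.range n, dσ s * dτ t * N s t := by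
    have step1 : ∑ i, σ i * τ i
        = ∑ i : Fin n, ∑ s ∈ Finset.range n, ∑ t ∈ Finset.range n,
            (if (i : ℕ) ≤ s then dσ s else 0) * (if (i : ℕ) ≤ t then dτ t else 0) := by
      apply Finset.sum_congr rfl; intro i _
      rw [hσrep i, hτrep i, Finset.sum_mul_sum]
    rw [step1, sum_swap3]
    apply Finset.sum_congr rfl; intro s _
    apply Finset.sum_congr rfl; intro t _
    rw [hN]
    simp only
    rw [Finset.mul_sum]
    apply Finset.sum_congr rfl; intro i _
    by_cases h1 : (i : ℕ) ≤ s <;> by_cases h2 : (i : ℕ) ≤ t <;>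
      simp [h1, h2] <;> ring
  -- the key bound M s t ≤ N s t
  have hrowbound : ∀ (T : Fin n → Fin n → ℝ), (∀ i j, 0 ≤ T i j) → (∀ i, ∑ j, T i j ≤ 1) →
      ∀ s t : ℕ, s ≤ t →
      (∑ i : Fin n, ∑ j : Fin n, if (i : ℕ) ≤ s ∧ (j : ℕ) ≤ t then T i j else 0)
        ≤ ∑ i : Fin n, if (i : ℕ) ≤ s ∧ (i : ℕ) ≤ t then (1:ℝ) else 0 := by
    intro T hT0 hTrow s t hst
    apply Finset.sum_le_sum
    intro i _
    by_cases hi : (i : ℕ) ≤ s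
    · have hit : (i : ℕ) ≤ t := le_trans hi hst
      rw [if_pos ⟨hi, hit⟩]
      calc (∑ j : Fin n, if (i : ℕ) ≤ s ∧ (j : ℕ) ≤ t then T i j else 0)
          ≤ ∑ j : Fin n, T i j := by
            apply Finset.sum_le_sum
            intro j _
            by_cases h : (i : ℕ) ≤ s ∧ (j : ℕ) ≤ t
            · rw [if_pos h]
            · rw [if_neg h]; exact hT0 i j
      _ ≤ 1 := hTrow i
    · rw [if_neg (fun h => hi h.1)]
      apply Finset.sum_nonpos
      intro j _
      rw [if_neg (fun h => hi h.1)]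
  have hMN : ∀ s t : ℕ, M s t ≤ N s t := by
    intro s t
    rcases le_total s t with hst | hts
    · exact hrowbound S hS0 hrow s t hst
    · have h := hrowbound (fun j i => S i j) (fun j i => hS0 i j) hcol t s hts
      have hM' : M s t = ∑ i : Fin n, ∑ j : Fin n, if (j : ℕ) ≤ t ∧ (i : ℕ) ≤ s then (fun j i => S i j) j i else 0 := by
        rw [hM]
        apply Finset.sum_congr rfl; intro i _
        apply Finset.sum_congr rfl; intro j _
        simp only [and_comm]
      rw [hM', Finset.sum_comm]
      have hN' : N s t = ∑ i : Fin n, if (i : ℕ) ≤ t ∧ (i : ℕ) ≤ s then (1:ℝ) else 0 := by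
        rw [hN]
        apply Finset.sum_congr rfl; intro i _
        simp only [and_comm]
      rw [hN']
      exact h
  rw [hLHS, hRHS]
  apply Finset.sum_le_sum
  intro s _
  apply Finset.sum_le_sum
  intro t _
  exact mul_le_mul_of_nonneg_left (hMN s t) (mul_nonneg (hdσ0 s) (hdτ0 t))

/-! ### von Neumann trace inequality -/

lemma sum_swap4' {α β γ δ : Type*} [Fintype α] [Fintype β] [Fintype γ] [Fintype δ]
    (F : α → β → γ → δ → ℝ) :
    (∑ a, ∑ b, ∑ i, ∑ j, F a b i j) = ∑ i, ∑ j, ∑ a, ∑ b, F a b i j := by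
  calc (∑ a, ∑ b, ∑ i, ∑ j, F a b i j)
      = ∑ a, ∑ i, ∑ j, ∑ b, F a b i j := by
        apply Finset.sum_congr rfl; intro a _
        calc (∑ b, ∑ i, ∑ j, F a b i j) = ∑ i, ∑ b, ∑ j, F a b i j := Finset.sum_comm
          _ = ∑ i, ∑ j, ∑ b, F a b i j := by
              apply Finset.sum_congr rfl; intro i _; exact Finset.sum_comm
    _ = ∑ i, ∑ a, ∑ j, ∑ b, F a b i j := Finset.sum_comm
    _ = ∑ i, ∑ j, ∑ a, ∑ b, F a b i j := by
        apply Finset.sum_congr rfl; intro i _; exact Finset.sum_comm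

lemma entry_of_svd {m n : ℕ} {X : Mat m n} {U : Mat m n} {V : Matrix (Fin n) (Fin n) ℝ}
    {d : Fin n → ℝ} (hX : X = U * Matrix.diagonal d * Vᵀ) (a : Fin m) (b : Fin n) :
    X a b = ∑ i, U a i * d i * V b i := by
  rw [hX, Matrix.mul_apply]
  apply Finset.sum_congr rfl; intro i _
  rw [Matrix.mul_diagonal, Matrix.transpose_apply]

lemma diag_one_eq {k : ℕ} : (1 : Matrix (Fin k) (Fin k) ℝ) = Matrix.diagonal (fun _ => 1) :=
  (Matrix.diagonal_one).symm

lemma col_sq_sum {m n : ℕ} {U : Mat m n} {e : Fin n → ℝ}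
    (hU : Uᵀ * U = Matrix.diagonal e) (i : Fin n) : ∑ a, U a i ^ 2 = e i := by
  have h := congrFun (congrFun hU i) i
  rw [Matrix.mul_apply] at h
  simp only [Matrix.transpose_apply, Matrix.diagonal_apply_eq] at h
  rw [← h]
  apply Finset.sum_congr rfl; intro a _; ring

set_option maxHeartbeats 2000000 in
lemma traceIneq {m n : ℕ} (X Y : Mat m n) :
    finner X Y ≤ ∑ j, svals X j * svals Y j := by
  obtain ⟨U₁, V₁, e₁, hU₁, he₁0, he₁1, hV₁, hX⟩ := svd_exists X
  obtain ⟨U₂, V₂, e₂, hU₂, he₂0, he₂1, hV₂, hY⟩ := svd_exists Y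
  set σ : Fin n → ℝ := svals X with hσ
  set τ : Fin n → ℝ := svals Y with hτ
  set A : Fin n → Fin n → ℝ := fun i j => ∑ a, U₁ a i * U₂ a j with hA
  set B : Fin n → Fin n → ℝ := fun i j => ∑ b, V₁ b i * V₂ b j with hB
  have hexp : finner X Y = ∑ i, ∑ j, σ i * τ j * (A i j * B i j) := by
    unfold finner
    calc (∑ a, ∑ b, X a b * Y a b)
        = ∑ a, ∑ b, (∑ i, ∑ j, (U₁ a i * σ i * V₁ b i) * (U₂ a j * τ j * V₂ b j)) := by
          apply Finset.sum_congr rfl; intro a _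
          apply Finset.sum_congr rfl; intro b _
          rw [entry_of_svd hX, entry_of_svd hY, Finset.sum_mul_sum]
      _ = ∑ i, ∑ j, ∑ a, ∑ b, (U₁ a i * σ i * V₁ b i) * (U₂ a j * τ j * V₂ b j) :=
          sum_swap4' (fun a b i j => (U₁ a i * σ i * V₁ b i) * (U₂ a j * τ j * V₂ b j))
      _ = ∑ i, ∑ j, σ i * τ j * (A i j * B i j) := by
          apply Finset.sum_congr rfl; intro i _
          apply Finset.sum_congr rfl; intro j _
          rw [hA, hB]
          simp only
          rw [Finset.sum_mul_sum, Finset.mul_sum]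
          apply Finset.sum_congr rfl; intro a _
          rw [Finset.mul_sum]
          apply Finset.sum_congr rfl; intro b _
          ring
  -- Bessel bounds
  have hArow : ∀ i, ∑ j, A i j ^ 2 ≤ 1 := by
    intro i
    have h1 : ∀ j, A i j = ∑ a, U₂ a j * U₁ a i := by
      intro j; rw [hA]; simp only
      apply Finset.sum_congr rfl; intro a _; ring
    calc ∑ j, A i j ^ 2 = ∑ j, (∑ a, U₂ a j * U₁ a i) ^ 2 := by
          apply Finset.sum_congr rfl; intro j _; rw [h1]
      _ ≤ ∑ a, U₁ a i ^ 2 := bessel U₂ e₂ hU₂ he₂1 _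
      _ = e₁ i := col_sq_sum hU₁ i
      _ ≤ 1 := he₁1 i
  have hAcol : ∀ j, ∑ i, A i j ^ 2 ≤ 1 := by
    intro j
    calc ∑ i, A i j ^ 2 = ∑ i, (∑ a, U₁ a i * U₂ a j) ^ 2 := rfl
      _ ≤ ∑ a, U₂ a j ^ 2 := bessel U₁ e₁ hU₁ he₁1 _
      _ = e₂ j := col_sq_sum hU₂ j
      _ ≤ 1 := he₂1 j
  have hVe₁ : V₁ᵀ * V₁ = Matrix.diagonal (fun _ => (1:ℝ)) := by rw [hV₁, diag_one_eq]
  have hVe₂ : V₂ᵀ * V₂ = Matrix.diagonal (fun _ => (1:ℝ)) := by rw [hV₂, diag_one_eq]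
  have hBrow : ∀ i, ∑ j, B i j ^ 2 ≤ 1 := by
    intro i
    have h1 : ∀ j, B i j = ∑ b, V₂ b j * V₁ b i := by
      intro j; rw [hB]; simp only
      apply Finset.sum_congr rfl; intro b _; ring
    calc ∑ j, B i j ^ 2 = ∑ j, (∑ b, V₂ b j * V₁ b i) ^ 2 := by
          apply Finset.sum_congr rfl; intro j _; rw [h1]
      _ ≤ ∑ b, V₁ b i ^ 2 := bessel V₂ _ hVe₂ (fun _ => le_refl 1) _
      _ = 1 := col_sq_sum hVe₁ i
  have hBcol : ∀ j, ∑ i, B i j ^ 2 ≤ 1 := by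
    intro j
    calc ∑ i, B i j ^ 2 = ∑ i, (∑ b, V₁ b i * V₂ b j) ^ 2 := rfl
      _ ≤ ∑ b, V₂ b j ^ 2 := bessel V₁ _ hVe₁ (fun _ => le_refl 1) _
      _ = 1 := col_sq_sum hVe₂ j
  set S : Fin n → Fin n → ℝ := fun i j => (A i j ^ 2 + B i j ^ 2) / 2 with hS
  have hσ0 : ∀ i, 0 ≤ σ i := svals_nonneg X
  have hτ0 : ∀ i, 0 ≤ τ i := svals_nonneg Y
  have step2 : ∑ i, ∑ j, σ i * τ j * (A i j * B i j) ≤ ∑ i, ∑ j, σ i * τ j * S i j := by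
    apply Finset.sum_le_sum; intro i _
    apply Finset.sum_le_sum; intro j _
    apply mul_le_mul_of_nonneg_left _ (mul_nonneg (hσ0 i) (hτ0 j))
    rw [hS]; simp only
    nlinarith [sq_nonneg (A i j - B i j)]
  have step3 : ∑ i, ∑ j, σ i * τ j * S i j ≤ ∑ i, σ i * τ i := by
    apply abel_ineq σ τ S (svals_antitone X) (svals_antitone Y) hσ0 hτ0
    · intro i j; rw [hS]; simp only; positivity
    · intro i
      rw [hS]
      simp only
      rw [show (∑ j, (A i j ^ 2 + B i j ^ 2) / 2)
          = ((∑ j, A i j ^ 2) + (∑ j, B i j ^ 2)) / 2 from by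
        rw [← Finset.sum_add_distrib, ← Finset.sum_div]]
      have := hArow i
      have := hBrow i
      linarith
    · intro j
      rw [hS]
      simp only
      rw [show (∑ i, (A i j ^ 2 + B i j ^ 2) / 2)
          = ((∑ i, A i j ^ 2) + (∑ i, B i j ^ 2)) / 2 from by
        rw [← Finset.sum_add_distrib, ← Finset.sum_div]]
      have := hAcol j
      have := hBcol j
      linarith
  rw [hexp]
  exact le_trans step2 step3

/-! ### Norm algebra -/

lemma vnorm_nonneg {n : ℕ} (u : Fin n → ℝ) : 0 ≤ vnorm u := Real.sqrt_nonneg _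
lemma fnorm_nonneg {m n : ℕ} (Z : Mat m n) : 0 ≤ fnorm Z := Real.sqrt_nonneg _

lemma svals_norm_le {m n : ℕ} (X Y : Mat m n) :
    vnorm (svals X - svals Y) ≤ fnorm (X - Y) := by
  unfold vnorm fnorm
  apply Real.sqrt_le_sqrt
  have h1 : vinner (svals X - svals Y) (svals X - svals Y)
      = (∑ j, svals X j ^ 2) + (∑ j, svals Y j ^ 2) - 2 * ∑ j, svals X j * svals Y j := by
    unfold vinner
    calc (∑ j, (svals X - svals Y) j * (svals X - svals Y) j)
        = ∑ j, (svals X j ^ 2 + svals Y j ^ 2 - 2 * (svals X j * svals Y j)) := by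
          apply Finset.sum_congr rfl; intro j _
          simp only [Pi.sub_apply]
          ring
      _ = _ := by
          rw [Finset.sum_sub_distrib, Finset.sum_add_distrib, ← Finset.mul_sum]
  have h2 : finner (X - Y) (X - Y) = finner X X + finner Y Y - 2 * finner X Y := by
    unfold finner
    calc (∑ i, ∑ j, (X - Y) i j * (X - Y) i j)
        = ∑ i, ∑ j, (X i j * X i j + Y i j * Y i j - 2 * (X i j * Y i j)) := by
          apply Finset.sum_congr rfl; intro i _
          apply Finset.sum_congr rfl; intro j _
          simp only [Matrix.sub_apply]
          ring
      _ = ∑ i, ((∑ j, X i j * X i j) + (∑ j, Y i j * Y i j) - 2 * ∑ j, X i j * Y i j) := by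
          apply Finset.sum_congr rfl; intro i _
          rw [Finset.sum_sub_distrib, Finset.sum_add_distrib, ← Finset.mul_sum]
      _ = _ := by
          rw [Finset.sum_sub_distrib, Finset.sum_add_distrib, ← Finset.mul_sum]
  rw [h1, h2, sum_sq_svals X, sum_sq_svals Y]
  have := traceIneq X Y
  linarith

/-! ### diagonal embeddings -/

lemma mdiag_sub {m n : ℕ} (x y : Fin n → ℝ) :
    (mdiag (x - y) : Mat m n) = mdiag x - mdiag y := by
  ext i j
  by_cases h : (i : ℕ) = (j : ℕ) <;> simp [mdiag, h]

lemma fnorm_mdiag {m n : ℕ} (hmn : n ≤ m) (z : Fin n → ℝ) :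
    fnorm (mdiag z : Mat m n) = vnorm z := by
  unfold fnorm vnorm finner vinner
  congr 1
  calc (∑ i : Fin m, ∑ j : Fin n, mdiag z i j * mdiag z i j)
      = ∑ j : Fin n, ∑ i : Fin m, mdiag z i j * mdiag z i j := Finset.sum_comm
    _ = ∑ j, z j * z j := by
        apply Finset.sum_congr rfl; intro j _
        rw [Finset.sum_eq_single (Fin.castLE hmn j)]
        · simp [mdiag]
        · intro i _ hi
          have hne : (i : ℕ) ≠ (j : ℕ) := by
            intro hc
            exact hi (Fin.ext (by simp [hc]))
          simp [mdiag, hne]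
        · intro h; exact absurd (Finset.mem_univ _) h

lemma gram_mdiag {m n : ℕ} (hmn : n ≤ m) (y : Fin n → ℝ) :
    (mdiag y : Mat m n)ᴴ * (mdiag y : Mat m n) = Matrix.diagonal (fun i => y i * y i) := by
  ext i j
  rw [Matrix.mul_apply]
  simp only [Matrix.conjTranspose_apply, star_trivial]
  by_cases h : i = j
  · subst h
    rw [Matrix.diagonal_apply_eq]
    rw [Finset.sum_eq_single (Fin.castLE hmn i)]
    · simp [mdiag]
    · intro a _ ha
      have hne : (a : ℕ) ≠ (i : ℕ) := by
        intro hc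
        exact ha (Fin.ext (by simp [hc]))
      simp [mdiag, hne]
    · intro h; exact absurd (Finset.mem_univ _) h
  · rw [Matrix.diagonal_apply_ne _ h]
    apply Finset.sum_eq_zero
    intro a _
    by_cases h1 : (a : ℕ) = (i : ℕ)
    · by_cases h2 : (a : ℕ) = (j : ℕ)
      · exact absurd (Fin.ext (h1.symm.trans h2)) h
      · simp [mdiag, h2]
    · simp [mdiag, h1]

lemma svals_mdiag {m n : ℕ} (hmn : n ≤ m) (y : Fin n → ℝ) (i : Fin n) :
    svals (mdiag y : Mat m n) i
      = |y (Tuple.sort (fun j => -(y j * y j)) i)| := by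
  have hdec : (mdiag y : Mat m n)ᴴ * (mdiag y : Mat m n)
      = 1 * Matrix.diagonal (fun i => y i * y i) * (1 : Matrix (Fin n) (Fin n) ℝ)ᵀ := by
    rw [gram_mdiag hmn]
    simp
  have h1 : (1 : Matrix (Fin n) (Fin n) ℝ)ᵀ * 1 = 1 := by simp
  have he := eigs_of_decomp (gram_herm (mdiag y)) h1 hdec
  unfold svals
  rw [congrFun he i]
  rw [show sortD (fun i => y i * y i) i
      = y (Tuple.sort (fun j => -(y j * y j)) i) * y (Tuple.sort (fun j => -(y j * y j)) i)
      from rfl]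
  exact Real.sqrt_mul_self_eq_abs _

/-! ### signed permutations -/

lemma signedPerm_mulVec {n : ℕ} (e : Equiv.Perm (Fin n)) (s : Fin n → ℝ)
    (Q : Matrix (Fin n) (Fin n) ℝ) (hQe : ∀ i j, Q i j = if j = e i then s i else 0)
    (v : Fin n → ℝ) (i : Fin n) :
    Q.mulVec v i = s i * v (e i) := by
  unfold Matrix.mulVec dotProduct
  rw [Finset.sum_eq_single (e i)]
  · simp only []
    rw [hQe]; simp
  · intro j _ hj
    simp only []
    rw [hQe]; simp [hj]
  · intro h; exact absurd (Finset.mem_univ _) h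

lemma svals_mdiag_signed {m n : ℕ} (hmn : n ≤ m) (y : Fin n → ℝ) :
    ∃ Q, IsSignedPerm Q ∧ Q.mulVec y = svals (mdiag y : Mat m n) := by
  set q := Tuple.sort (fun j => -(y j * y j)) with hq
  set s : Fin n → ℝ := fun i => if y (q i) < 0 then -1 else 1 with hs
  refine ⟨(fun i j => if j = q i then s i else 0), ⟨q, s, fun i => by
    by_cases h : y (q i) < 0 <;> simp [hs, h], fun i j => rfl⟩, ?_⟩
  funext i
  rw [signedPerm_mulVec q s _ (fun i j => rfl) y i, svals_mdiag hmn y i]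
  by_cases h : y (q i) < 0
  · rw [hs]; simp only [if_pos h]
    rw [abs_of_neg h]; ring
  · rw [hs]; simp only [if_neg h]
    push_neg at h
    rw [abs_of_nonneg h]; ring

lemma sq_one_of_sign {s : ℝ} (h : s = 1 ∨ s = -1) : s * s = 1 := by
  rcases h with h | h <;> rw [h] <;> norm_num

lemma signedPerm_inv {n : ℕ} {Q : Matrix (Fin n) (Fin n) ℝ} (hQ : IsSignedPerm Q) :
    ∃ Q', IsSignedPerm Q' ∧ ∀ v, Q.mulVec (Q'.mulVec v) = v := by
  obtain ⟨e, s, hs, hQe⟩ := hQ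
  refine ⟨(fun i j => if j = e.symm i then s (e.symm i) else 0),
    ⟨e.symm, fun i => s (e.symm i), fun i => hs _, fun i j => rfl⟩, ?_⟩
  intro v
  funext i
  rw [signedPerm_mulVec e s Q hQe _ i,
    signedPerm_mulVec e.symm (fun i => s (e.symm i)) _ (fun i j => rfl) v (e i)]
  simp only [Equiv.symm_apply_apply]
  rw [← mul_assoc, sq_one_of_sign (hs i), one_mul]

lemma vnorm_signedPerm {n : ℕ} {Q : Matrix (Fin n) (Fin n) ℝ} (hQ : IsSignedPerm Q)
    (v : Fin n → ℝ) : vnorm (Q.mulVec v) = vnorm v := by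
  obtain ⟨e, s, hs, hQe⟩ := hQ
  unfold vnorm vinner
  congr 1
  calc (∑ i, Q.mulVec v i * Q.mulVec v i)
      = ∑ i, v (e i) * v (e i) := by
        apply Finset.sum_congr rfl; intro i _
        rw [signedPerm_mulVec e s Q hQe v i]
        have := sq_one_of_sign (hs i)
        ring_nf
        nlinarith [this]
    _ = ∑ i, v i * v i := Equiv.sum_comp e (fun t => v t * v t)

end SP

end Paper

open Paper

/-- For an orthogonally invariant matrix function `F = f ∘ σ` with `f` absolutely symmetric,
`dist(x, dom f) = dist(diag(x), dom F)` for every `x ∈ ℝⁿ`. -/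
theorem stmt4 {m n : ℕ} (hmn : n ≤ m) (f : (Fin n → ℝ) → EReal)
    (habs : AbsSymFun f) (hbot : ∀ x, f x ≠ ⊥) (x : Fin n → ℝ) :
    vdist x {y | f y ≠ ⊤} = mdist (mdiag x) {X : Mat m n | f (svals X) ≠ ⊤} := by
  classical
  have hmem1 : ∀ y : Fin n → ℝ, f y ≠ ⊤ → f (svals (mdiag y : Mat m n)) ≠ ⊤ := by
    intro y hy
    obtain ⟨Q, hQ, hQy⟩ := SP.svals_mdiag_signed hmn y
    rw [← hQy, habs Q hQ]
    exact hy
  by_cases hne : ∃ y : Fin n → ℝ, f y ≠ ⊤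
  · obtain ⟨y₀, hy₀⟩ := hne
    have hbdd1 : BddBelow ((fun y => vnorm (x - y)) '' {y | f y ≠ ⊤}) := by
      refine ⟨0, ?_⟩
      rintro r ⟨y, _, rfl⟩
      exact SP.vnorm_nonneg _
    have hbdd2 : BddBelow ((fun Y => fnorm (mdiag x - Y)) '' {X : Mat m n | f (svals X) ≠ ⊤}) := by
      refine ⟨0, ?_⟩
      rintro r ⟨Y, _, rfl⟩
      exact SP.fnorm_nonneg _
    have hne2 : ((fun Y => fnorm (mdiag x - Y)) '' {X : Mat m n | f (svals X) ≠ ⊤}).Nonempty :=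
      ⟨_, Set.mem_image_of_mem _ (show (mdiag y₀ : Mat m n) ∈ {X : Mat m n | f (svals X) ≠ ⊤}
        from hmem1 y₀ hy₀)⟩
    have hne1 : ((fun y => vnorm (x - y)) '' {y | f y ≠ ⊤}).Nonempty :=
      ⟨_, Set.mem_image_of_mem _ (show y₀ ∈ {y | f y ≠ ⊤} from hy₀)⟩
    unfold vdist mdist
    apply le_antisymm
    · apply le_csInf hne2
      rintro b ⟨Y, hY, rfl⟩
      obtain ⟨Q, hQ, hQx⟩ := SP.svals_mdiag_signed hmn x
      obtain ⟨Q', hQ', hQQ'⟩ := SP.signedPerm_inv hQ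
      set y : Fin n → ℝ := Q'.mulVec (svals Y) with hy
      have hyf : f y ≠ ⊤ := by
        rw [hy, habs Q' hQ']
        exact hY
      have hbound : vnorm (x - y) ≤ fnorm (mdiag x - Y) := by
        have h1 : vnorm (x - y) = vnorm (Q.mulVec (x - y)) := (SP.vnorm_signedPerm hQ _).symm
        have h2 : Q.mulVec (x - y) = svals (mdiag x : Mat m n) - svals Y := by
          rw [Matrix.mulVec_sub, hQx, hy, hQQ']
        rw [h1, h2]
        exact SP.svals_norm_le (mdiag x) Y
      exact le_trans (csInf_le hbdd1 (Set.mem_image_of_mem _ (show y ∈ {y | f y ≠ ⊤} from hyf)))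
        hbound
    · apply le_csInf hne1
      rintro b ⟨y, hy, rfl⟩
      have heq : fnorm ((mdiag x : Mat m n) - mdiag y) = vnorm (x - y) := by
        rw [← SP.mdiag_sub, SP.fnorm_mdiag hmn]
      calc sInf ((fun Y => fnorm (mdiag x - Y)) '' {X : Mat m n | f (svals X) ≠ ⊤})
          ≤ fnorm ((mdiag x : Mat m n) - mdiag y) :=
            csInf_le hbdd2 (Set.mem_image_of_mem _
              (show (mdiag y : Mat m n) ∈ {X : Mat m n | f (svals X) ≠ ⊤} from hmem1 y hy))
        _ = vnorm (x - y) := heq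
  · push_neg at hne
    have h1 : {y : Fin n → ℝ | f y ≠ ⊤} = ∅ := by
      ext y; simpa using hne y
    have h2 : {X : Mat m n | f (svals X) ≠ ⊤} = ∅ := by
      ext X
      simpa using hne (svals X)
    unfold vdist mdist
    rw [h1, h2, Set.image_empty, Set.image_empty]
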